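/- arXiv:1503.01328 — 2 statements merged into one kernel-verified Lean document; each statement's English description precedes it below -/
import Mathlib

section
/- For all real constants γ > 0, σ > 0, α > 0 and β ∈ ℝ, one has ∫_{-∞}^{∞} e^{-α(y-β)²} ( ∫_{-∞}^{y} e^{-σ x²} G_γ(x) dx ) dy = (π^{3/2}/√(ασγ)) · Φ_Σ(0, β), where Σ is the 2×2 matrix with entries Σ₁₁ = (σ+γ)/(2σγ), Σ₁₂ = Σ₂₁ = -1/(2σ), Σ₂₂ = (σ+α)/(2σα). -/
open MeasureTheory Real Matrix

/-- `G_γ(x) = ∫_{-∞}^x e^{-γ t²} dt`. -/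
noncomputable def Gint (γ x : ℝ) : ℝ := ∫ t in Set.Iic x, Real.exp (-γ * t ^ 2)

/-- Centered bivariate Gaussian cumulative distribution function with covariance `S`. -/
noncomputable def PhiMat (S : Matrix (Fin 2) (Fin 2) ℝ) (x₁ x₂ : ℝ) : ℝ :=
  ∫ s in Set.Iic x₁, ∫ t in Set.Iic x₂,
    (2 * Real.pi * Real.sqrt S.det)⁻¹ *
      Real.exp (-(1 / 2) * (![s, t] ⬝ᵥ (S⁻¹ *ᵥ ![s, t])))

/-- The quadratic form appearing in the exponent of the bivariate Gaussian density. -/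
noncomputable def Qf (γ σ α : ℝ) (s t : ℝ) : ℝ :=
  (γ*(σ+α)*s^2 + 2*γ*α*s*t + α*(σ+γ)*t^2)/(σ+α+γ)

lemma shift_Iic (f : ℝ → ℝ) (a : ℝ) :
    ∫ t in Set.Iic a, f t = ∫ v in Set.Iic 0, f (v + a) := by
  have h := (measurePreserving_add_right volume a).setIntegral_preimage_emb
      (measurableEmbedding_addRight a) f (Set.Iic a)
  rw [← h]
  congr 1
  ext x; simp

lemma quad_bound {a b : ℝ} (ha : 0 < a) (hb : 0 < b) (x w : ℝ) :
    a/2 * x^2 + a*b/(a+2*b) * w^2 ≤ a*x^2 + b*(x+w)^2 := by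
  have h2b : 0 < a + 2*b := by linarith
  have key : a*b/(a+2*b)*w^2 ≤ a/2*x^2 + b*(x+w)^2 := by
    rw [div_mul_eq_mul_div, div_le_iff₀ h2b]
    nlinarith [sq_nonneg ((a+2*b)*x+2*b*w)]
  nlinarith [sq_nonneg x]

lemma gauss_complete {a : ℝ} (ha : 0 < a) (m R : ℝ) :
    ∫ y : ℝ, exp (-(a*(y-m)^2 + R)) = Real.sqrt (π/a) * exp (-R) := by
  have h2 : (∫ y : ℝ, exp (-a*(y-m)^2)) = ∫ y : ℝ, exp (-a*y^2) := by
    have := (measurePreserving_add_right volume (-m)).integral_comp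
      (measurableEmbedding_addRight (-m)) (fun z : ℝ => exp (-a*z^2))
    simpa [sub_eq_add_neg] using this
  calc ∫ y : ℝ, exp (-(a*(y-m)^2 + R)) = ∫ y : ℝ, exp (-a*(y-m)^2) * exp (-R) := by
        congr 1; funext y; rw [← Real.exp_add]; ring_nf
    _ = (∫ y : ℝ, exp (-a*(y-m)^2)) * exp (-R) := integral_mul_const _ _
    _ = Real.sqrt (π/a) * exp (-R) := by rw [h2, integral_gaussian]

lemma inner_y {γ σ α : ℝ} (hγ : 0 < γ) (hσ : 0 < σ) (hα : 0 < α) (β v s : ℝ) :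
    ∫ y : ℝ, exp (-(α*(y-β)^2 + σ*(v+y)^2 + γ*(s+v+y)^2))
      = Real.sqrt (π/(σ+α+γ)) * exp (-(Qf γ σ α s (β+v))) := by
  have ha : 0 < σ+α+γ := by linarith
  have key : ∀ y : ℝ, α*(y-β)^2 + σ*(v+y)^2 + γ*(s+v+y)^2
      = (σ+α+γ)*(y - (α*β - σ*v - γ*(s+v))/(σ+α+γ))^2 + Qf γ σ α s (β+v) := by
    intro y
    rw [Qf]
    field_simp
    ring
  calc ∫ y : ℝ, exp (-(α*(y-β)^2 + σ*(v+y)^2 + γ*(s+v+y)^2))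
      = ∫ y : ℝ, exp (-((σ+α+γ)*(y - (α*β - σ*v - γ*(s+v))/(σ+α+γ))^2
          + Qf γ σ α s (β+v))) := by congr 1; funext y; rw [key y]
    _ = Real.sqrt (π/(σ+α+γ)) * exp (-(Qf γ σ α s (β+v))) := gauss_complete ha _ _

lemma integrable_gauss_shift {b : ℝ} (hb : 0 < b) (c : ℝ) :
    Integrable (fun x : ℝ => exp (-b*(x+c)^2)) :=
  (integrable_exp_neg_mul_sq hb).comp_add_right c

lemma Gint_nonneg (γ x : ℝ) : 0 ≤ Gint γ x :=
  integral_nonneg fun _ => (Real.exp_pos _).le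

lemma Gint_le {γ : ℝ} (hγ : 0 < γ) (x : ℝ) : Gint γ x ≤ Real.sqrt (π/γ) := by
  rw [← integral_gaussian]
  exact setIntegral_le_integral (integrable_exp_neg_mul_sq hγ)
    (ae_of_all _ fun t => (Real.exp_pos _).le)

lemma Gint_measurable {γ : ℝ} (hγ : 0 < γ) : Measurable (Gint γ) := by
  have hmono : Monotone (Gint γ) := fun x x' h =>
    setIntegral_mono_set (integrable_exp_neg_mul_sq hγ).integrableOn
      (ae_of_all _ fun t => (Real.exp_pos _).le)
      (HasSubset.Subset.eventuallyLE (Set.Iic_subset_Iic.mpr h))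
  exact hmono.measurable

lemma Qf_lower {γ σ α : ℝ} (hγ : 0 < γ) (hσ : 0 < σ) (hα : 0 < α) (s t : ℝ) :
    γ*σ/(σ+α+γ)*s^2 + α*σ/(σ+α+γ)*t^2 ≤ Qf γ σ α s t := by
  have ha : (0:ℝ) < σ+α+γ := by linarith
  rw [Qf, show γ*σ/(σ+α+γ)*s^2 + α*σ/(σ+α+γ)*t^2 = (γ*σ*s^2 + α*σ*t^2)/(σ+α+γ) by ring]
  exact (div_le_div_iff_of_pos_right ha).mpr (by nlinarith [sq_nonneg (s+t), mul_pos hγ hα])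

lemma integrable_prod_bound {μ ν : Measure ℝ} [SFinite μ] [SFinite ν] {F : ℝ × ℝ → ℝ}
    (hm : AEStronglyMeasurable F (μ.prod ν)) {g h : ℝ → ℝ}
    (hg : Integrable g μ) (hh : Integrable h ν)
    (hb : ∀ p : ℝ × ℝ, ‖F p‖ ≤ g p.1 * h p.2) : Integrable F (μ.prod ν) :=
  (hg.mul_prod hh).mono' hm (ae_of_all _ hb)

lemma integrableA {γ σ α β : ℝ} (hγ : 0 < γ) (hσ : 0 < σ) (hα : 0 < α) :
    Integrable (Function.uncurry fun y v =>
      Real.exp (-α * (y - β) ^ 2) * (Real.exp (-σ * (v+y) ^ 2) * Gint γ (v+y)))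
      (volume.prod (volume.restrict (Set.Iic 0))) := by
  refine integrable_prod_bound ?_
    (g := fun y => Real.sqrt (π/γ) * exp (-(α/2)*(y-β)^2))
    (h := fun v => exp (-(α*σ/(α+2*σ))*(v+β)^2)) ?_ ?_ ?_
  · apply Measurable.aestronglyMeasurable
    apply Measurable.mul (by fun_prop)
    exact Measurable.mul (by fun_prop)
      ((Gint_measurable hγ).comp (measurable_snd.add measurable_fst))
  · have : Integrable (fun y : ℝ => exp (-(α/2)*(y + -β)^2)) :=
      integrable_gauss_shift (by positivity) (-β)
    simpa [sub_eq_add_neg, neg_mul] using this.const_mul (Real.sqrt (π/γ))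
  · exact ((integrable_gauss_shift (by positivity) β)).restrict
  · rintro ⟨y, v⟩
    simp only [Function.uncurry]
    have hGn := Gint_nonneg γ (v+y)
    have hGl := Gint_le hγ (v+y)
    have hq : α/2*(y-β)^2 + α*σ/(α+2*σ)*(v+β)^2 ≤ α*(y-β)^2 + σ*(v+y)^2 := by
      have h := quad_bound hα hσ (y-β) (v+β)
      have e : (y-β)+(v+β) = v+y := by ring
      rw [e] at h; exact h
    rw [Real.norm_eq_abs, abs_of_nonneg (by positivity)]
    calc exp (-α * (y - β) ^ 2) * (exp (-σ * (v+y) ^ 2) * Gint γ (v+y))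
        ≤ exp (-α * (y - β) ^ 2) * (exp (-σ * (v+y) ^ 2) * Real.sqrt (π/γ)) := by
          gcongr
      _ = Real.sqrt (π/γ) * (exp (-α * (y - β) ^ 2) * exp (-σ*(v+y)^2)) := by ring
      _ = Real.sqrt (π/γ) * exp (-(α*(y-β)^2 + σ*(v+y)^2)) := by
          rw [← Real.exp_add]; ring_nf
      _ ≤ Real.sqrt (π/γ) * exp (-(α/2*(y-β)^2 + α*σ/(α+2*σ)*(v+β)^2)) := by
          have := Real.exp_le_exp.mpr (neg_le_neg hq)
          have hs : (0:ℝ) ≤ Real.sqrt (π/γ) := Real.sqrt_nonneg _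
          exact mul_le_mul_of_nonneg_left this hs
      _ = Real.sqrt (π/γ) * (exp (-(α/2)*(y-β)^2) * exp (-(α*σ/(α+2*σ))*(v+β)^2)) := by
          rw [← Real.exp_add]; ring_nf
      _ = Real.sqrt (π/γ) * exp (-(α/2)*(y-β)^2) * exp (-(α*σ/(α+2*σ))*(v+β)^2) := by
          ring

lemma integrableB {γ σ α β v : ℝ} (hγ : 0 < γ) (hσ : 0 < σ) (hα : 0 < α) :
    Integrable (Function.uncurry fun y s =>
      exp (-(α*(y-β)^2 + σ*(v+y)^2 + γ*(s+v+y)^2)))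
      (volume.prod (volume.restrict (Set.Iic 0))) := by
  refine integrable_prod_bound ?_
    (g := fun y => exp (-(α/2)*(y-β)^2))
    (h := fun s => exp (-(α*γ/(α+2*γ))*(s+(v+β))^2)) ?_ ?_ ?_
  · exact (Measurable.aestronglyMeasurable (by fun_prop))
  · have : Integrable (fun y : ℝ => exp (-(α/2)*(y + -β)^2)) :=
      integrable_gauss_shift (by positivity) (-β)
    simpa [sub_eq_add_neg] using this
  · exact ((integrable_gauss_shift (by positivity) (v+β))).restrict
  · rintro ⟨y, s⟩
    simp only [Function.uncurry]
    rw [Real.norm_eq_abs, abs_of_nonneg (by positivity)]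
    have hq : α/2*(y-β)^2 + α*γ/(α+2*γ)*(s+(v+β))^2
        ≤ α*(y-β)^2 + σ*(v+y)^2 + γ*(s+v+y)^2 := by
      have h := quad_bound hα hγ (y-β) (s+(v+β))
      have e : (y-β)+(s+(v+β)) = s+v+y := by ring
      rw [e] at h
      nlinarith [sq_nonneg (v+y), mul_nonneg hσ.le (sq_nonneg (v+y))]
    calc exp (-(α*(y-β)^2 + σ*(v+y)^2 + γ*(s+v+y)^2))
        ≤ exp (-(α/2*(y-β)^2 + α*γ/(α+2*γ)*(s+(v+β))^2)) :=
          Real.exp_le_exp.mpr (neg_le_neg hq)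
      _ = exp (-(α/2)*(y-β)^2) * exp (-(α*γ/(α+2*γ))*(s+(v+β))^2) := by
          rw [← Real.exp_add]; ring_nf

lemma integrableC {γ σ α β : ℝ} (hγ : 0 < γ) (hσ : 0 < σ) (hα : 0 < α) :
    Integrable (Function.uncurry fun v s => exp (-(Qf γ σ α s (β+v))))
      ((volume.restrict (Set.Iic (0:ℝ))).prod (volume.restrict (Set.Iic (0:ℝ)))) := by
  have ha : (0:ℝ) < σ+α+γ := by linarith
  refine integrable_prod_bound ?_
    (g := fun v => exp (-(α*σ/(σ+α+γ))*(v+β)^2))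
    (h := fun s => exp (-(γ*σ/(σ+α+γ))*s^2)) ?_ ?_ ?_
  · apply Measurable.aestronglyMeasurable
    simp only [Qf]
    fun_prop
  · exact ((integrable_gauss_shift (by positivity) β)).restrict
  · exact (integrable_exp_neg_mul_sq (by positivity)).restrict
  · rintro ⟨v, s⟩
    simp only [Function.uncurry]
    rw [Real.norm_eq_abs, abs_of_nonneg (by positivity)]
    have hq := Qf_lower hγ hσ hα s (β+v)
    calc exp (-(Qf γ σ α s (β+v)))
        ≤ exp (-(γ*σ/(σ+α+γ)*s^2 + α*σ/(σ+α+γ)*(β+v)^2)) :=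
          Real.exp_le_exp.mpr (neg_le_neg hq)
      _ = exp (-(α*σ/(σ+α+γ))*(v+β)^2) * exp (-(γ*σ/(σ+α+γ))*s^2) := by
          rw [← Real.exp_add]; ring_nf

lemma rhs_eq {γ σ α : ℝ} (hγ : 0 < γ) (hσ : 0 < σ) (hα : 0 < α) (β : ℝ) :
    Real.pi ^ (3 / 2 : ℝ) / Real.sqrt (α * σ * γ) *
        PhiMat !![(σ + γ) / (2 * σ * γ), -(1 / (2 * σ));
                  -(1 / (2 * σ)), (σ + α) / (2 * σ * α)] 0 β
    = Real.sqrt (π/(σ+α+γ)) *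
        ∫ s in Set.Iic (0:ℝ), ∫ v in Set.Iic 0, exp (-(Qf γ σ α s (β+v))) := by
  have ha : (0:ℝ) < σ+α+γ := by linarith
  have hdet : (!![(σ + γ) / (2 * σ * γ), -(1 / (2 * σ));
      -(1 / (2 * σ)), (σ + α) / (2 * σ * α)]).det = (σ+α+γ)/(4*σ*γ*α) := by
    rw [det_fin_two_of]; field_simp; ring
  have hinv : (!![(σ + γ) / (2 * σ * γ), -(1 / (2 * σ));
      -(1 / (2 * σ)), (σ + α) / (2 * σ * α)])⁻¹ =
      !![2*γ*(σ+α)/(σ+α+γ), 2*γ*α/(σ+α+γ); 2*γ*α/(σ+α+γ), 2*α*(σ+γ)/(σ+α+γ)] := by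
    apply inv_eq_right_inv
    rw [mul_fin_two, one_fin_two]
    ext i j
    fin_cases i <;> fin_cases j <;>
      simp [Matrix.cons_val_zero, Matrix.cons_val_one] <;> field_simp <;> ring
  have hquad : ∀ s t : ℝ,
      -(1/2 : ℝ) * (![s, t] ⬝ᵥ ((!![(σ + γ) / (2 * σ * γ), -(1 / (2 * σ));
        -(1 / (2 * σ)), (σ + α) / (2 * σ * α)])⁻¹ *ᵥ ![s, t])) = -(Qf γ σ α s t) := by
    intro s t
    rw [hinv, Qf]
    simp only [Matrix.mulVec, dotProduct, Fin.sum_univ_two, Matrix.of_apply, Matrix.cons_val',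
      Matrix.cons_val_zero, Matrix.cons_val_one, Matrix.head_cons, Matrix.empty_val',
      Matrix.cons_val_fin_one, Matrix.head_fin_const]
    field_simp
    ring
  have hPhi : PhiMat !![(σ + γ) / (2 * σ * γ), -(1 / (2 * σ));
      -(1 / (2 * σ)), (σ + α) / (2 * σ * α)] 0 β
      = (2 * π * Real.sqrt ((σ+α+γ)/(4*σ*γ*α)))⁻¹ *
        ∫ s in Set.Iic (0:ℝ), ∫ v in Set.Iic 0, exp (-(Qf γ σ α s (β+v))) := by
    rw [PhiMat]
    have : ∀ s : ℝ, (∫ t in Set.Iic β,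
        (2 * Real.pi * Real.sqrt ((!![(σ + γ) / (2 * σ * γ), -(1 / (2 * σ));
          -(1 / (2 * σ)), (σ + α) / (2 * σ * α)]).det))⁻¹ *
          Real.exp (-(1 / 2) * (![s, t] ⬝ᵥ ((!![(σ + γ) / (2 * σ * γ), -(1 / (2 * σ));
          -(1 / (2 * σ)), (σ + α) / (2 * σ * α)])⁻¹ *ᵥ ![s, t]))))
        = (2 * π * Real.sqrt ((σ+α+γ)/(4*σ*γ*α)))⁻¹ *
          ∫ v in Set.Iic 0, exp (-(Qf γ σ α s (β+v))) := by
      intro s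
      rw [integral_const_mul, hdet]
      congr 1
      rw [show (∫ t in Set.Iic β, Real.exp (-(1 / 2) * (![s, t] ⬝ᵥ ((!![(σ + γ) / (2 * σ * γ),
          -(1 / (2 * σ)); -(1 / (2 * σ)), (σ + α) / (2 * σ * α)])⁻¹ *ᵥ ![s, t]))))
        = ∫ t in Set.Iic β, exp (-(Qf γ σ α s t)) from by
          congr 1; funext t; rw [hquad s t],
        shift_Iic (fun t => exp (-(Qf γ σ α s t))) β]
      congr 1; funext v; rw [add_comm v β]
    calc (∫ s in Set.Iic (0:ℝ), ∫ t in Set.Iic β, _) = ∫ s in Set.Iic (0:ℝ),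
          (2 * π * Real.sqrt ((σ+α+γ)/(4*σ*γ*α)))⁻¹ *
          ∫ v in Set.Iic 0, exp (-(Qf γ σ α s (β+v))) := by
            congr 1; funext s; exact this s
      _ = _ := integral_const_mul _ _
  rw [hPhi, ← mul_assoc]
  congr 1
  have h32 : Real.pi ^ (3/2 : ℝ) = π * Real.sqrt π := by
    rw [show (3/2 : ℝ) = 1 + 1/2 by norm_num, Real.rpow_add pi_pos, Real.rpow_one,
      Real.sqrt_eq_rpow]
  rw [h32, show α * σ * γ = σ*γ*α by ring, Real.sqrt_div ha.le,
    show (4:ℝ)*σ*γ*α = 4*(σ*γ*α) by ring, Real.sqrt_mul (by norm_num : (0:ℝ) ≤ 4),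
    show Real.sqrt 4 = 2 by rw [show (4:ℝ) = 2^2 by norm_num, Real.sqrt_sq (by norm_num)],
    Real.sqrt_div pi_pos.le]
  have hπ : Real.sqrt π ≠ 0 := by positivity
  have h1 : Real.sqrt (σ*γ*α) ≠ 0 := by positivity
  have h2 : Real.sqrt (σ+α+γ) ≠ 0 := by positivity
  have hpi : π = Real.sqrt π * Real.sqrt π := (Real.mul_self_sqrt pi_pos.le).symm
  field_simp

theorem stmt1 (γ σ α β : ℝ) (hγ : 0 < γ) (hσ : 0 < σ) (hα : 0 < α) :
    (∫ y : ℝ, Real.exp (-α * (y - β) ^ 2) *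
        ∫ x in Set.Iic y, Real.exp (-σ * x ^ 2) * Gint γ x) =
      Real.pi ^ (3 / 2 : ℝ) / Real.sqrt (α * σ * γ) *
        PhiMat !![(σ + γ) / (2 * σ * γ), -(1 / (2 * σ));
                  -(1 / (2 * σ)), (σ + α) / (2 * σ * α)] 0 β := by
  have ha : (0:ℝ) < σ+α+γ := by linarith
  have lhs_eq : (∫ y : ℝ, Real.exp (-α * (y - β) ^ 2) *
        ∫ x in Set.Iic y, Real.exp (-σ * x ^ 2) * Gint γ x)
      = ∫ y : ℝ, ∫ v in Set.Iic 0,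
          Real.exp (-α * (y - β) ^ 2) * (Real.exp (-σ * (v+y) ^ 2) * Gint γ (v+y)) := by
    congr 1; funext y
    rw [shift_Iic (fun x => Real.exp (-σ * x ^ 2) * Gint γ x) y, ← integral_const_mul]
  rw [lhs_eq]
  rw [integral_integral_swap (f := fun y v =>
      Real.exp (-α * (y - β) ^ 2) * (Real.exp (-σ * (v+y) ^ 2) * Gint γ (v+y)))
      (integrableA hγ hσ hα)]
  have step3 : ∀ v : ℝ, (∫ y : ℝ, Real.exp (-α * (y - β) ^ 2) *
        (Real.exp (-σ * (v+y) ^ 2) * Gint γ (v+y)))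
      = Real.sqrt (π/(σ+α+γ)) * ∫ s in Set.Iic 0, exp (-(Qf γ σ α s (β+v))) := by
    intro v
    have h1 : ∀ y : ℝ, Real.exp (-α * (y - β) ^ 2) * (Real.exp (-σ * (v+y) ^ 2) * Gint γ (v+y))
        = ∫ s in Set.Iic 0, exp (-(α*(y-β)^2 + σ*(v+y)^2 + γ*(s+v+y)^2)) := by
      intro y
      rw [show Gint γ (v+y) = ∫ s in Set.Iic 0, Real.exp (-γ * (s+(v+y)) ^ 2) from
        shift_Iic (fun t => Real.exp (-γ * t ^ 2)) (v+y), ← integral_const_mul, ← integral_const_mul]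
      congr 1; funext s
      rw [← Real.exp_add, ← Real.exp_add]; ring_nf
    calc (∫ y : ℝ, Real.exp (-α * (y - β) ^ 2) * (Real.exp (-σ * (v+y) ^ 2) * Gint γ (v+y)))
        = ∫ y : ℝ, ∫ s in Set.Iic 0,
            exp (-(α*(y-β)^2 + σ*(v+y)^2 + γ*(s+v+y)^2)) := by congr 1; funext y; rw [h1 y]
      _ = ∫ s in Set.Iic 0, ∫ y : ℝ,
            exp (-(α*(y-β)^2 + σ*(v+y)^2 + γ*(s+v+y)^2)) := by
          exact integral_integral_swap (f := fun y s =>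
            exp (-(α*(y-β)^2 + σ*(v+y)^2 + γ*(s+v+y)^2))) (integrableB hγ hσ hα)
      _ = ∫ s in Set.Iic 0, Real.sqrt (π/(σ+α+γ)) * exp (-(Qf γ σ α s (β+v))) := by
          congr 1; funext s; exact inner_y hγ hσ hα β v s
      _ = Real.sqrt (π/(σ+α+γ)) * ∫ s in Set.Iic 0, exp (-(Qf γ σ α s (β+v))) :=
          integral_const_mul _ _
  calc (∫ v in Set.Iic (0:ℝ), ∫ y : ℝ, Real.exp (-α * (y - β) ^ 2) *
          (Real.exp (-σ * (v+y) ^ 2) * Gint γ (v+y)))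
      = ∫ v in Set.Iic (0:ℝ), Real.sqrt (π/(σ+α+γ)) *
          ∫ s in Set.Iic 0, exp (-(Qf γ σ α s (β+v))) := by
        congr 1; funext v; exact step3 v
    _ = Real.sqrt (π/(σ+α+γ)) * ∫ v in Set.Iic (0:ℝ),
          ∫ s in Set.Iic 0, exp (-(Qf γ σ α s (β+v))) := integral_const_mul _ _
    _ = Real.sqrt (π/(σ+α+γ)) * ∫ s in Set.Iic (0:ℝ),
          ∫ v in Set.Iic 0, exp (-(Qf γ σ α s (β+v))) := by
        congr 1
        exact integral_integral_swap (f := fun v s => exp (-(Qf γ σ α s (β+v))))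
          (integrableC hγ hσ hα)
    _ = Real.pi ^ (3 / 2 : ℝ) / Real.sqrt (α * σ * γ) *
        PhiMat !![(σ + γ) / (2 * σ * γ), -(1 / (2 * σ));
                  -(1 / (2 * σ)), (σ + α) / (2 * σ * α)] 0 β := (rhs_eq hγ hσ hα β).symm
end

section
/- One has (1/(√2 π)) ∫_{λ₁≤λ₂≤λ₃} e^{-λ₁²/2} e^{-λ₂²/2} e^{-λ₃²} (λ₂-λ₁)(λ₃-λ₁)(λ₃-λ₂) dλ₁ dλ₂ dλ₃ = 1/√6. Equivalently, E^{3}_{GOE}{ exp(-λ₃²/2) } = 1/√6, where λ₃ is the largest eigenvalue of a 3×3 GOE matrix. -/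
open MeasureTheory Real Set Filter Topology

noncomputable def gG (a : ℝ) : ℝ := ∫ x in Set.Iic a, Real.exp (-x ^ 2 / 2)
noncomputable def gH (a : ℝ) : ℝ := ∫ x in Set.Iic a, Real.exp (-x ^ 2)

lemma exp_sq (y : ℝ) : Real.exp (-y ^ 2) = Real.exp (-y ^ 2 / 2) * Real.exp (-y ^ 2 / 2) := by
  rw [← Real.exp_add]; congr 1; ring

lemma pow_gauss_bound (n : ℕ) {b : ℝ} (hb : 0 < b) (x : ℝ) :
    ‖x ^ n * Real.exp (-b * x ^ 2)‖ ≤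
      (Nat.factorial n : ℝ) * Real.exp (1 / (2 * b)) * Real.exp (-(b / 2) * x ^ 2) := by
  have hn : (0:ℝ) < Nat.factorial n := by positivity
  have h1 : |x| ^ n ≤ (Nat.factorial n : ℝ) * Real.exp |x| := by
    have h := Real.pow_div_factorial_le_exp _ (abs_nonneg x) n
    calc |x| ^ n = |x| ^ n / Nat.factorial n * Nat.factorial n := by field_simp
    _ ≤ Real.exp |x| * Nat.factorial n := by
        exact mul_le_mul_of_nonneg_right h hn.le
    _ = (Nat.factorial n : ℝ) * Real.exp |x| := by ring
  have h3 : |x| ≤ 1 / (2 * b) + b / 2 * x ^ 2 := by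
    have h4 : 2 * b * |x| ≤ b ^ 2 * x ^ 2 + 1 := by
      nlinarith [sq_nonneg (b * |x| - 1), sq_abs x]
    have hb2 : (0:ℝ) < 2 * b := by linarith
    calc |x| = 2 * b * |x| / (2 * b) := by field_simp
    _ ≤ (b ^ 2 * x ^ 2 + 1) / (2 * b) := by gcongr
    _ = 1 / (2 * b) + b / 2 * x ^ 2 := by field_simp; ring
  have h2 : Real.exp |x| * Real.exp (-b * x ^ 2) ≤
      Real.exp (1 / (2 * b)) * Real.exp (-(b / 2) * x ^ 2) := by
    rw [← Real.exp_add, ← Real.exp_add]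
    apply Real.exp_le_exp.2
    nlinarith [h3, sq_nonneg x]
  calc ‖x ^ n * Real.exp (-b * x ^ 2)‖ = |x| ^ n * Real.exp (-b * x ^ 2) := by
        rw [norm_mul, norm_pow, Real.norm_eq_abs, Real.norm_eq_abs,
          abs_of_pos (Real.exp_pos _)]
  _ ≤ (Nat.factorial n : ℝ) * Real.exp |x| * Real.exp (-b * x ^ 2) :=
        mul_le_mul_of_nonneg_right h1 (Real.exp_pos _).le
  _ = (Nat.factorial n : ℝ) * (Real.exp |x| * Real.exp (-b * x ^ 2)) := by ring
  _ ≤ (Nat.factorial n : ℝ) * (Real.exp (1 / (2 * b)) * Real.exp (-(b / 2) * x ^ 2)) :=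
        mul_le_mul_of_nonneg_left h2 hn.le
  _ = _ := by ring

lemma integrable_pow_gauss (n : ℕ) {b : ℝ} (hb : 0 < b) :
    Integrable (fun x : ℝ => x ^ n * Real.exp (-b * x ^ 2)) := by
  have hb2 : 0 < b / 2 := half_pos hb
  refine Integrable.mono' ((integrable_exp_neg_mul_sq hb2).const_mul
    ((Nat.factorial n : ℝ) * Real.exp (1 / (2 * b)))) ?_
    (Filter.Eventually.of_forall fun x => pow_gauss_bound n hb x)
  exact (by fun_prop : Continuous fun x : ℝ => x ^ n * Real.exp (-b * x ^ 2)).aestronglyMeasurable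

lemma integrable_poly_gauss {b : ℝ} (hb : 0 < b) (p q r : ℝ) :
    Integrable (fun x : ℝ => (p + q * x + r * x ^ 2) * Real.exp (-b * x ^ 2)) := by
  have h0 := (integrable_pow_gauss 0 hb).const_mul p
  have h1 := (integrable_pow_gauss 1 hb).const_mul q
  have h2 := (integrable_pow_gauss 2 hb).const_mul r
  exact ((h0.add h1).add h2).congr (Filter.Eventually.of_forall fun x => by simp only [Pi.add_apply]; ring)

lemma hasDerivAt_integral_Iic {f : ℝ → ℝ} (hc : Continuous f) (hi : Integrable f) (a : ℝ) :
    HasDerivAt (fun t => ∫ x in Set.Iic t, f x) (f a) a := by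
  have key : (fun t => ∫ x in Set.Iic t, f x) =
      fun t => (∫ x in Set.Iic 0, f x) + ∫ x in (0:ℝ)..t, f x := by
    funext t
    rw [← intervalIntegral.integral_Iic_sub_Iic hi.integrableOn hi.integrableOn]
    ring
  rw [key]
  simpa [Pi.add_def] using (hasDerivAt_const a (∫ x in Set.Iic 0, f x)).add
    (intervalIntegral.integral_hasDerivAt_right (hc.intervalIntegrable 0 a)
      (hc.stronglyMeasurableAtFilter volume (nhds a)) hc.continuousAt)

lemma tendsto_integral_Iic_atBot {f : ℝ → ℝ} (hi : Integrable f) (h0 : ∀ x, 0 ≤ f x)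
    (hb : ∀ x ≤ (-2:ℝ), f x ≤ Real.exp x) :
    Tendsto (fun a => ∫ x in Set.Iic a, f x) atBot (𝓝 0) := by
  refine tendsto_of_tendsto_of_tendsto_of_le_of_le' tendsto_const_nhds
    Real.tendsto_exp_atBot ?_ ?_
  · exact Eventually.of_forall fun a => setIntegral_nonneg measurableSet_Iic fun x _ => h0 x
  · filter_upwards [eventually_le_atBot (-2:ℝ)] with a ha
    calc ∫ x in Set.Iic a, f x ≤ ∫ x in Set.Iic a, Real.exp x :=
        setIntegral_mono_on hi.integrableOn (integrableOn_exp_Iic a) measurableSet_Iic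
          (fun x hx => hb x (le_trans hx ha))
    _ = Real.exp a := integral_exp_Iic a

lemma int_gauss_half : Integrable (fun x : ℝ => Real.exp (-x ^ 2 / 2)) := by
  refine (integrable_exp_neg_mul_sq (show (0:ℝ) < 1/2 by norm_num)).congr
    (Filter.Eventually.of_forall fun x => ?_)
  show Real.exp (-(1/2:ℝ) * x ^ 2) = Real.exp (-x ^ 2 / 2)
  rw [show -(1/2:ℝ) * x ^ 2 = -x ^ 2 / 2 from by ring]

lemma int_gauss_one : Integrable (fun x : ℝ => Real.exp (-x ^ 2)) := by
  refine (integrable_exp_neg_mul_sq (show (0:ℝ) < 1 by norm_num)).congr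
    (Filter.Eventually.of_forall fun x => ?_)
  show Real.exp (-(1:ℝ) * x ^ 2) = Real.exp (-x ^ 2)
  rw [show -(1:ℝ) * x ^ 2 = -x ^ 2 from by ring]

lemma cont_gauss_half : Continuous (fun x : ℝ => Real.exp (-x ^ 2 / 2)) := by fun_prop

lemma cont_gauss_one : Continuous (fun x : ℝ => Real.exp (-x ^ 2)) := by fun_prop

lemma gG_hasDeriv (a : ℝ) : HasDerivAt gG (Real.exp (-a ^ 2 / 2)) a :=
  hasDerivAt_integral_Iic cont_gauss_half int_gauss_half a

lemma gH_hasDeriv (a : ℝ) : HasDerivAt gH (Real.exp (-a ^ 2)) a :=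
  hasDerivAt_integral_Iic cont_gauss_one int_gauss_one a

lemma gG_cont : Continuous gG :=
  continuous_iff_continuousAt.2 fun a => (gG_hasDeriv a).continuousAt

lemma gH_cont : Continuous gH :=
  continuous_iff_continuousAt.2 fun a => (gH_hasDeriv a).continuousAt

lemma gG_nonneg (a : ℝ) : 0 ≤ gG a :=
  setIntegral_nonneg measurableSet_Iic fun x _ => (Real.exp_pos _).le

lemma gH_nonneg (a : ℝ) : 0 ≤ gH a :=
  setIntegral_nonneg measurableSet_Iic fun x _ => (Real.exp_pos _).le

lemma total_gauss_half : ∫ x : ℝ, Real.exp (-x ^ 2 / 2) = Real.sqrt (2 * π) := by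
  have h := integral_gaussian (1/2 : ℝ)
  rw [show π / (1/2:ℝ) = 2 * π from by ring] at h
  rw [← h]
  simp only [show ∀ x : ℝ, -x ^ 2 / 2 = -(1/2:ℝ) * x ^ 2 from fun x => by ring]

lemma total_gauss_one : ∫ x : ℝ, Real.exp (-x ^ 2) = Real.sqrt π := by
  have h := integral_gaussian (1 : ℝ)
  rw [show π / (1:ℝ) = π from by ring] at h
  rw [← h]
  simp only [show ∀ x : ℝ, -x ^ 2 = -(1:ℝ) * x ^ 2 from fun x => by ring]

lemma gG_le (a : ℝ) : gG a ≤ Real.sqrt (2 * π) := by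
  rw [← total_gauss_half]
  exact setIntegral_le_integral int_gauss_half
    (Filter.Eventually.of_forall fun x => (Real.exp_pos _).le)

lemma gH_le (a : ℝ) : gH a ≤ Real.sqrt π := by
  rw [← total_gauss_one]
  exact setIntegral_le_integral int_gauss_one
    (Filter.Eventually.of_forall fun x => (Real.exp_pos _).le)

lemma gG_bound (a : ℝ) : ‖gG a‖ ≤ Real.sqrt (2 * π) := by
  rw [Real.norm_eq_abs, abs_of_nonneg (gG_nonneg a)]; exact gG_le a

lemma gH_bound (a : ℝ) : ‖gH a‖ ≤ Real.sqrt π := by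
  rw [Real.norm_eq_abs, abs_of_nonneg (gH_nonneg a)]; exact gH_le a

lemma gG_tendsto : Tendsto gG atBot (𝓝 0) := by
  refine tendsto_integral_Iic_atBot int_gauss_half (fun x => (Real.exp_pos _).le)
    (fun x hx => Real.exp_le_exp.2 ?_)
  nlinarith [mul_nonneg (by linarith : (0:ℝ) ≤ -x) (by linarith : (0:ℝ) ≤ -x - 2)]

lemma gH_tendsto : Tendsto gH atBot (𝓝 0) := by
  refine tendsto_integral_Iic_atBot int_gauss_one (fun x => (Real.exp_pos _).le)
    (fun x hx => Real.exp_le_exp.2 ?_)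
  nlinarith [mul_nonneg (by linarith : (0:ℝ) ≤ -x) (by linarith : (0:ℝ) ≤ -x - 2)]

lemma gG_add_neg (t : ℝ) : gG t + gG (-t) = Real.sqrt (2 * π) := by
  have h1 : gG (-t) = ∫ x in Set.Ioi t, Real.exp (-x ^ 2 / 2) := by
    have h := integral_comp_neg_Iic (-t) (fun x => Real.exp (-x ^ 2 / 2))
    simp only [neg_neg, neg_sq] at h
    rw [gG]
    exact h
  rw [h1, gG, intervalIntegral.integral_Iic_add_Ioi int_gauss_half.integrableOn int_gauss_half.integrableOn,
    total_gauss_half]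

lemma gH_add_neg (t : ℝ) : gH t + gH (-t) = Real.sqrt π := by
  have h1 : gH (-t) = ∫ x in Set.Ioi t, Real.exp (-x ^ 2) := by
    have h := integral_comp_neg_Iic (-t) (fun x => Real.exp (-x ^ 2))
    simp only [neg_neg, neg_sq] at h
    rw [gH]
    exact h
  rw [h1, gH, intervalIntegral.integral_Iic_add_Ioi int_gauss_one.integrableOn int_gauss_one.integrableOn,
    total_gauss_one]

lemma sq_tendsto_atTop : Tendsto (fun y : ℝ => y ^ 2) atTop atTop :=
  tendsto_pow_atTop (by norm_num)

lemma sq_tendsto_atBot : Tendsto (fun y : ℝ => y ^ 2) atBot atTop := by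
  have h := sq_tendsto_atTop.comp (tendsto_neg_atBot_atTop : Tendsto (fun y : ℝ => -y) atBot atTop)
  refine h.congr fun y => ?_
  simp [Function.comp_def]

lemma gauss_tendsto_atBot {b : ℝ} (hb : 0 < b) :
    Tendsto (fun y : ℝ => Real.exp (-b * y ^ 2)) atBot (𝓝 0) := by
  apply Real.tendsto_exp_atBot.comp
  have h2 : Tendsto (fun y : ℝ => b * y ^ 2) atBot atTop := sq_tendsto_atBot.const_mul_atTop hb
  have h3 := (tendsto_neg_atTop_atBot : Tendsto (fun y : ℝ => -y) atTop atBot).comp h2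
  refine h3.congr fun y => ?_
  simp [Function.comp_def]

lemma gauss_tendsto_atTop {b : ℝ} (hb : 0 < b) :
    Tendsto (fun y : ℝ => Real.exp (-b * y ^ 2)) atTop (𝓝 0) := by
  apply Real.tendsto_exp_atBot.comp
  have h2 : Tendsto (fun y : ℝ => b * y ^ 2) atTop atTop :=
    sq_tendsto_atTop.const_mul_atTop hb
  have h3 := (tendsto_neg_atTop_atBot : Tendsto (fun y : ℝ => -y) atTop atBot).comp h2
  refine h3.congr fun y => ?_
  simp [Function.comp_def]

lemma mul_gauss_tendsto {b : ℝ} (hb : 0 < b) {l : Filter ℝ}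
    (hl : Tendsto (fun y : ℝ => Real.exp (-(b/2) * y ^ 2)) l (𝓝 0)) :
    Tendsto (fun y : ℝ => y * Real.exp (-b * y ^ 2)) l (𝓝 0) := by
  have h2 : Tendsto (fun y : ℝ =>
      ((Nat.factorial 1 : ℕ) : ℝ) * Real.exp (1 / (2 * b)) * Real.exp (-(b/2) * y ^ 2)) l (𝓝 0) := by
    have := hl.const_mul (((Nat.factorial 1 : ℕ) : ℝ) * Real.exp (1 / (2 * b)))
    simpa [mul_assoc] using this
  refine squeeze_zero_norm (fun y => ?_) h2
  simpa [pow_one] using pow_gauss_bound 1 hb y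

lemma tendsto_exp_half_atBot : Tendsto (fun y : ℝ => Real.exp (-y ^ 2 / 2)) atBot (𝓝 0) := by
  refine (gauss_tendsto_atBot (show (0:ℝ) < 1/2 by norm_num)).congr fun y => ?_
  rw [show -(1/2:ℝ) * y ^ 2 = -y ^ 2 / 2 from by ring]

lemma tendsto_exp_one_atBot : Tendsto (fun y : ℝ => Real.exp (-y ^ 2)) atBot (𝓝 0) := by
  refine (gauss_tendsto_atBot (show (0:ℝ) < 1 by norm_num)).congr fun y => ?_
  rw [show -(1:ℝ) * y ^ 2 = -y ^ 2 from by ring]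

lemma tendsto_mul_exp_half_atBot :
    Tendsto (fun y : ℝ => y * Real.exp (-y ^ 2 / 2)) atBot (𝓝 0) := by
  refine (mul_gauss_tendsto (show (0:ℝ) < 1/2 by norm_num)
    (gauss_tendsto_atBot (show (0:ℝ) < 1/2/2 by norm_num))).congr fun y => ?_
  rw [show -(1/2:ℝ) * y ^ 2 = -y ^ 2 / 2 from by ring]

lemma hasDerivAt_gauss_half (x : ℝ) :
    HasDerivAt (fun x : ℝ => Real.exp (-x ^ 2 / 2)) (Real.exp (-x ^ 2 / 2) * (-x)) x := by
  have h1 : HasDerivAt (fun x : ℝ => -x ^ 2 / 2) (-x) x := by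
    have h := ((hasDerivAt_pow 2 x).neg).div_const 2
    refine h.congr_deriv ?_
    push_cast
    ring
  exact h1.exp

lemma hasDerivAt_gauss_one (x : ℝ) :
    HasDerivAt (fun x : ℝ => Real.exp (-x ^ 2)) (Real.exp (-x ^ 2) * (-(2 * x))) x := by
  have h1 : HasDerivAt (fun x : ℝ => -x ^ 2) (-(2 * x)) x := by
    have h := (hasDerivAt_pow 2 x).neg
    refine h.congr_deriv ?_
    push_cast
    ring
  exact h1.exp

lemma inner_eval (b c : ℝ) :
    ∫ x in Set.Iic b, Real.exp (-x ^ 2 / 2) * ((b - x) * (c - x)) =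
      (1 + b * c) * gG b + c * Real.exp (-b ^ 2 / 2) := by
  have hderiv : ∀ x ∈ Set.Iic b,
      HasDerivAt (fun x => (b + c - x) * Real.exp (-x ^ 2 / 2) + (1 + b * c) * gG x)
        (Real.exp (-x ^ 2 / 2) * ((b - x) * (c - x))) x := by
    intro x _
    have hlin : HasDerivAt (fun x : ℝ => b + c - x) (-1) x := by
      simpa using (hasDerivAt_id x).const_sub (b + c)
    have h := (hlin.mul (hasDerivAt_gauss_half x)).add
      ((gG_hasDeriv x).const_mul (1 + b * c))
    refine h.congr_deriv ?_
    ring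
  have hint : IntegrableOn (fun x => Real.exp (-x ^ 2 / 2) * ((b - x) * (c - x)))
      (Set.Iic b) := by
    refine ((integrable_poly_gauss one_half_pos (b*c) (-(b+c)) 1).congr
      (Filter.Eventually.of_forall fun x => ?_)).integrableOn
    simp only [show -(1/2:ℝ) * x ^ 2 = -x ^ 2 / 2 from by ring]
    ring
  have htend : Tendsto (fun x => (b + c - x) * Real.exp (-x ^ 2 / 2) + (1 + b * c) * gG x)
      atBot (𝓝 0) := by
    have t1 : Tendsto (fun x : ℝ => (b + c) * Real.exp (-x ^ 2 / 2) - x * Real.exp (-x ^ 2 / 2))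
        atBot (𝓝 0) := by
      simpa using (tendsto_exp_half_atBot.const_mul (b + c)).sub tendsto_mul_exp_half_atBot
    have t2 := gG_tendsto.const_mul (1 + b * c)
    have := t1.add t2
    simp only [mul_zero, add_zero] at this
    refine this.congr (fun x => by ring)
  have key := integral_Iic_of_hasDerivAt_of_tendsto' hderiv hint htend
  rw [key]
  ring

lemma middle_eval (c : ℝ) :
    ∫ y in Set.Iic c, Real.exp (-y ^ 2 / 2) * (c - y) *
        ((1 + y * c) * gG y + c * Real.exp (-y ^ 2 / 2)) =
      Real.exp (-c ^ 2 / 2) * gG c + (2 * c ^ 2 - 1) * gH c + c * Real.exp (-c ^ 2) := by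
  have hderiv : ∀ y ∈ Set.Iic c,
      HasDerivAt (fun y => (2 * c ^ 2 - 1) * gH y +
          (c * y - (c ^ 2 - 1)) * (Real.exp (-y ^ 2 / 2) * gG y) + c * Real.exp (-y ^ 2))
        (Real.exp (-y ^ 2 / 2) * (c - y) *
          ((1 + y * c) * gG y + c * Real.exp (-y ^ 2 / 2))) y := by
    intro y _
    have hu : HasDerivAt (fun y : ℝ => c * y - (c ^ 2 - 1)) c y := by
      simpa using ((hasDerivAt_id y).const_mul c).sub_const (c ^ 2 - 1)
    have hvw := (hasDerivAt_gauss_half y).mul (gG_hasDeriv y)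
    have h := (((gH_hasDeriv y).const_mul (2 * c ^ 2 - 1)).add (hu.mul hvw)).add
      ((hasDerivAt_gauss_one y).const_mul c)
    refine h.congr_deriv ?_
    simp only [Pi.mul_apply]
    rw [exp_sq y]
    ring
  have hint : IntegrableOn (fun y => Real.exp (-y ^ 2 / 2) * (c - y) *
      ((1 + y * c) * gG y + c * Real.exp (-y ^ 2 / 2))) (Set.Iic c) := by
    have ig := integrable_poly_gauss one_half_pos c (c^2-1) (-c)
    have i1 : Integrable (fun y : ℝ => gG y *
        ((c + (c^2-1) * y + (-c) * y ^ 2) * Real.exp (-(1/2:ℝ) * y ^ 2))) :=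
      Integrable.bdd_mul ig gG_cont.aestronglyMeasurable (c := Real.sqrt (2 * π)) (Filter.Eventually.of_forall gG_bound)
    have ig2 := integrable_poly_gauss (show (0:ℝ) < 1 by norm_num) (c*c) (-c) 0
    refine ((i1.add ig2).congr (Filter.Eventually.of_forall fun y => ?_)).integrableOn
    simp only [Pi.add_apply, show -(1/2:ℝ) * y ^ 2 = -y ^ 2 / 2 from by ring,
      show -(1:ℝ) * y ^ 2 = -y ^ 2 from by ring, exp_sq y]
    ring
  have htend : Tendsto (fun y => (2 * c ^ 2 - 1) * gH y +
      (c * y - (c ^ 2 - 1)) * (Real.exp (-y ^ 2 / 2) * gG y) + c * Real.exp (-y ^ 2))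
      atBot (𝓝 0) := by
    have t1 := gH_tendsto.const_mul (2 * c ^ 2 - 1)
    have ta : Tendsto (fun y : ℝ => Real.exp (-y ^ 2 / 2) * gG y) atBot (𝓝 0) := by
      simpa using tendsto_exp_half_atBot.mul gG_tendsto
    have tb : Tendsto (fun y : ℝ => y * Real.exp (-y ^ 2 / 2) * gG y) atBot (𝓝 0) := by
      simpa using tendsto_mul_exp_half_atBot.mul gG_tendsto
    have t2 : Tendsto (fun y : ℝ => (c * y - (c ^ 2 - 1)) *
        (Real.exp (-y ^ 2 / 2) * gG y)) atBot (𝓝 0) := by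
      have := (tb.const_mul c).sub (ta.const_mul (c ^ 2 - 1))
      simp only [mul_zero, sub_zero] at this
      refine this.congr (fun y => by ring)
    have t3 := tendsto_exp_one_atBot.const_mul c
    have := (t1.add t2).add t3
    simpa using this
  have key := integral_Iic_of_hasDerivAt_of_tendsto' hderiv hint htend
  rw [key]
  ring

lemma int_zero_sym : ∫ t : ℝ, (2 * t ^ 2 - 1) * Real.exp (-t ^ 2) = 0 := by
  have hderiv : ∀ t : ℝ, HasDerivAt (fun t : ℝ => -t * Real.exp (-t ^ 2))
      ((2 * t ^ 2 - 1) * Real.exp (-t ^ 2)) t := by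
    intro t
    have h := ((hasDerivAt_id t).neg).mul (hasDerivAt_gauss_one t)
    refine h.congr_deriv ?_
    simp only [Pi.neg_apply, id_eq]
    ring
  have hint : Integrable (fun t : ℝ => (2 * t ^ 2 - 1) * Real.exp (-t ^ 2)) := by
    refine (integrable_poly_gauss (show (0:ℝ) < 1 by norm_num) (-1) 0 2).congr
      (Filter.Eventually.of_forall fun t => ?_)
    simp only [show -(1:ℝ) * t ^ 2 = -t ^ 2 from by ring]
    ring
  have hb : Tendsto (fun t : ℝ => -t * Real.exp (-t ^ 2)) atBot (𝓝 0) := by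
    have h := (mul_gauss_tendsto (show (0:ℝ) < 1 by norm_num)
      (gauss_tendsto_atBot (show (0:ℝ) < 1/2 by norm_num))).neg
    rw [neg_zero] at h
    refine h.congr (fun t => ?_)
    simp only [show -(1:ℝ) * t ^ 2 = -t ^ 2 from by ring]
    ring
  have ht : Tendsto (fun t : ℝ => -t * Real.exp (-t ^ 2)) atTop (𝓝 0) := by
    have h := (mul_gauss_tendsto (show (0:ℝ) < 1 by norm_num)
      (gauss_tendsto_atTop (show (0:ℝ) < 1/2 by norm_num))).neg
    rw [neg_zero] at h
    refine h.congr (fun t => ?_)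
    simp only [show -(1:ℝ) * t ^ 2 = -t ^ 2 from by ring]
    ring
  have key := integral_of_hasDerivAt_of_tendsto (fun t => hderiv t) hint hb ht
  simpa using key

lemma outer_eval :
    ∫ t : ℝ, Real.exp (-t ^ 2) * (Real.exp (-t ^ 2 / 2) * gG t +
        (2 * t ^ 2 - 1) * gH t + t * Real.exp (-t ^ 2)) = π / Real.sqrt 3 := by
  have i1 : Integrable (fun t : ℝ => Real.exp (-(3/2:ℝ) * t ^ 2) * gG t) := by
    refine (Integrable.bdd_mul (integrable_exp_neg_mul_sq (show (0:ℝ) < 3/2 by norm_num))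
      gG_cont.aestronglyMeasurable (c := Real.sqrt (2 * π)) (Filter.Eventually.of_forall gG_bound)).congr
      (Filter.Eventually.of_forall fun t => mul_comm _ _)
  have i1neg : Integrable (fun t : ℝ => Real.exp (-(3/2:ℝ) * t ^ 2) * gG (-t)) := by
    refine (Integrable.bdd_mul (integrable_exp_neg_mul_sq (show (0:ℝ) < 3/2 by norm_num))
      (gG_cont.comp continuous_neg).aestronglyMeasurable
      (c := Real.sqrt (2 * π)) (Filter.Eventually.of_forall fun t => gG_bound (-t))).congr
      (Filter.Eventually.of_forall fun t => mul_comm _ _)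
  have ip2 : Integrable (fun t : ℝ => (2 * t ^ 2 - 1) * Real.exp (-t ^ 2)) := by
    refine (integrable_poly_gauss (show (0:ℝ) < 1 by norm_num) (-1) 0 2).congr
      (Filter.Eventually.of_forall fun t => ?_)
    simp only [show -(1:ℝ) * t ^ 2 = -t ^ 2 from by ring]
    ring
  have i2 : Integrable (fun t : ℝ => (2 * t ^ 2 - 1) * Real.exp (-t ^ 2) * gH t) := by
    refine (Integrable.bdd_mul ip2 gH_cont.aestronglyMeasurable
      (c := Real.sqrt π) (Filter.Eventually.of_forall gH_bound)).congr (Filter.Eventually.of_forall fun t => by ring)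
  have i2neg : Integrable (fun t : ℝ => (2 * t ^ 2 - 1) * Real.exp (-t ^ 2) * gH (-t)) := by
    refine (Integrable.bdd_mul ip2 (gH_cont.comp continuous_neg).aestronglyMeasurable
      (c := Real.sqrt π) (Filter.Eventually.of_forall fun t => gH_bound (-t))).congr
      (Filter.Eventually.of_forall fun t => by simp only [Function.comp_def]; ring)
  have i3 : Integrable (fun t : ℝ => t * Real.exp (-(2:ℝ) * t ^ 2)) := by
    refine (integrable_pow_gauss 1 (show (0:ℝ) < 2 by norm_num)).congr
      (Filter.Eventually.of_forall fun t => by simp only [pow_one])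
  have hsplit : (fun t : ℝ => Real.exp (-t ^ 2) * (Real.exp (-t ^ 2 / 2) * gG t +
      (2 * t ^ 2 - 1) * gH t + t * Real.exp (-t ^ 2))) =
      fun t => Real.exp (-(3/2:ℝ) * t ^ 2) * gG t +
        (2 * t ^ 2 - 1) * Real.exp (-t ^ 2) * gH t + t * Real.exp (-(2:ℝ) * t ^ 2) := by
    funext t
    rw [show Real.exp (-(3/2:ℝ) * t ^ 2) = Real.exp (-t ^ 2) * Real.exp (-t ^ 2 / 2) from by
        rw [← Real.exp_add]; congr 1; ring,
      show Real.exp (-(2:ℝ) * t ^ 2) = Real.exp (-t ^ 2) * Real.exp (-t ^ 2) from by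
        rw [← Real.exp_add]; congr 1; ring]
    ring
  have hadd : Integrable (fun t : ℝ => Real.exp (-(3/2:ℝ) * t ^ 2) * gG t +
      (2 * t ^ 2 - 1) * Real.exp (-t ^ 2) * gH t) :=
    (i1.add i2).congr (Filter.Eventually.of_forall fun t => by simp only [Pi.add_apply])
  rw [hsplit, integral_add hadd i3, integral_add i1 i2]
  -- first integral
  have hneg1 : ∫ t : ℝ, Real.exp (-(3/2:ℝ) * t ^ 2) * gG (-t) =
      ∫ t : ℝ, Real.exp (-(3/2:ℝ) * t ^ 2) * gG t := by
    have h := integral_neg_eq_self (fun t : ℝ => Real.exp (-(3/2:ℝ) * t ^ 2) * gG t) volume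
    simp only [neg_sq] at h
    exact h
  have key1 : (∫ t : ℝ, Real.exp (-(3/2:ℝ) * t ^ 2) * gG t) +
      (∫ t : ℝ, Real.exp (-(3/2:ℝ) * t ^ 2) * gG t) =
      Real.sqrt (2 * π) * Real.sqrt (π / (3/2)) := by
    nth_rewrite 2 [← hneg1]
    rw [← integral_add i1 i1neg]
    have : (fun t : ℝ => Real.exp (-(3/2:ℝ) * t ^ 2) * gG t +
        Real.exp (-(3/2:ℝ) * t ^ 2) * gG (-t)) =
        fun t : ℝ => Real.exp (-(3/2:ℝ) * t ^ 2) * Real.sqrt (2 * π) := by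
      funext t
      rw [← mul_add, gG_add_neg]
    rw [this, integral_mul_const, integral_gaussian, mul_comm]
  have E1 : (∫ t : ℝ, Real.exp (-(3/2:ℝ) * t ^ 2) * gG t) = π / Real.sqrt 3 := by
    have harith : Real.sqrt (2 * π) * Real.sqrt (π / (3/2)) = 2 * (π / Real.sqrt 3) := by
      rw [← Real.sqrt_mul (by positivity)]
      rw [show (2 * π) * (π / (3/2)) = (2 * π) ^ 2 / 3 from by ring]
      rw [Real.sqrt_div (by positivity)]
      rw [Real.sqrt_sq (by positivity)]
      ring
    linarith [key1, harith]
  -- second integral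
  have hneg2 : ∫ t : ℝ, (2 * t ^ 2 - 1) * Real.exp (-t ^ 2) * gH (-t) =
      ∫ t : ℝ, (2 * t ^ 2 - 1) * Real.exp (-t ^ 2) * gH t := by
    have h := integral_neg_eq_self (fun t : ℝ => (2 * t ^ 2 - 1) * Real.exp (-t ^ 2) * gH t) volume
    simp only [neg_sq] at h
    exact h
  have key2 : (∫ t : ℝ, (2 * t ^ 2 - 1) * Real.exp (-t ^ 2) * gH t) +
      (∫ t : ℝ, (2 * t ^ 2 - 1) * Real.exp (-t ^ 2) * gH t) = 0 := by
    nth_rewrite 2 [← hneg2]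
    rw [← integral_add i2 i2neg]
    have : (fun t : ℝ => (2 * t ^ 2 - 1) * Real.exp (-t ^ 2) * gH t +
        (2 * t ^ 2 - 1) * Real.exp (-t ^ 2) * gH (-t)) =
        fun t : ℝ => ((2 * t ^ 2 - 1) * Real.exp (-t ^ 2)) * Real.sqrt π := by
      funext t
      rw [show (2 * t ^ 2 - 1) * Real.exp (-t ^ 2) * gH t +
        (2 * t ^ 2 - 1) * Real.exp (-t ^ 2) * gH (-t) =
        ((2 * t ^ 2 - 1) * Real.exp (-t ^ 2)) * (gH t + gH (-t)) from by ring, gH_add_neg]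
    rw [this, integral_mul_const, int_zero_sym, zero_mul]
  have E2 : (∫ t : ℝ, (2 * t ^ 2 - 1) * Real.exp (-t ^ 2) * gH t) = 0 := by linarith
  -- third integral
  have E3 : (∫ t : ℝ, t * Real.exp (-(2:ℝ) * t ^ 2)) = 0 := by
    have h := integral_neg_eq_self (fun t : ℝ => t * Real.exp (-(2:ℝ) * t ^ 2)) volume
    simp only [neg_sq] at h
    rw [show (fun t : ℝ => -t * Real.exp (-(2:ℝ) * t ^ 2)) =
      fun t : ℝ => -(t * Real.exp (-(2:ℝ) * t ^ 2)) from funext fun t => by ring,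
      integral_neg] at h
    linarith
  rw [E1, E2, E3]
  ring

theorem stmt9 :
    (1 / (Real.sqrt 2 * Real.pi)) *
        ∫ l3 : ℝ, ∫ l2 in Set.Iic l3, ∫ l1 in Set.Iic l2,
          Real.exp (-(l1 ^ 2) / 2) * Real.exp (-(l2 ^ 2) / 2) * Real.exp (-(l3 ^ 2)) *
            ((l2 - l1) * (l3 - l1) * (l3 - l2)) =
      1 / Real.sqrt 6 := by
  have step1 : ∀ l3 l2 : ℝ,
      (∫ l1 in Set.Iic l2,
        Real.exp (-(l1 ^ 2) / 2) * Real.exp (-(l2 ^ 2) / 2) * Real.exp (-(l3 ^ 2)) *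
          ((l2 - l1) * (l3 - l1) * (l3 - l2))) =
      Real.exp (-(l2 ^ 2) / 2) * Real.exp (-(l3 ^ 2)) * (l3 - l2) *
        ((1 + l2 * l3) * gG l2 + l3 * Real.exp (-l2 ^ 2 / 2)) := by
    intro l3 l2
    rw [show (fun l1 => Real.exp (-(l1 ^ 2) / 2) * Real.exp (-(l2 ^ 2) / 2) *
        Real.exp (-(l3 ^ 2)) * ((l2 - l1) * (l3 - l1) * (l3 - l2))) =
      fun l1 => (Real.exp (-(l2 ^ 2) / 2) * Real.exp (-(l3 ^ 2)) * (l3 - l2)) *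
        (Real.exp (-l1 ^ 2 / 2) * ((l2 - l1) * (l3 - l1))) from funext fun l1 => by ring]
    rw [MeasureTheory.integral_const_mul, inner_eval l2 l3]
  have step2 : ∀ l3 : ℝ,
      (∫ l2 in Set.Iic l3, Real.exp (-(l2 ^ 2) / 2) * Real.exp (-(l3 ^ 2)) * (l3 - l2) *
        ((1 + l2 * l3) * gG l2 + l3 * Real.exp (-l2 ^ 2 / 2))) =
      Real.exp (-l3 ^ 2) * (Real.exp (-l3 ^ 2 / 2) * gG l3 +
        (2 * l3 ^ 2 - 1) * gH l3 + l3 * Real.exp (-l3 ^ 2)) := by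
    intro l3
    rw [show (fun l2 : ℝ => Real.exp (-(l2 ^ 2) / 2) * Real.exp (-(l3 ^ 2)) * (l3 - l2) *
        ((1 + l2 * l3) * gG l2 + l3 * Real.exp (-l2 ^ 2 / 2))) =
      fun l2 : ℝ => Real.exp (-l3 ^ 2) * (Real.exp (-l2 ^ 2 / 2) * (l3 - l2) *
        ((1 + l2 * l3) * gG l2 + l3 * Real.exp (-l2 ^ 2 / 2))) from funext fun l2 => by ring]
    rw [MeasureTheory.integral_const_mul, middle_eval l3]
  simp only [step1, step2]
  rw [outer_eval]
  have h2 : Real.sqrt 2 * Real.sqrt 3 = Real.sqrt 6 := by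
    rw [← Real.sqrt_mul (by norm_num)]
    norm_num
  have h3 : Real.sqrt 3 ≠ 0 := by positivity
  have h2' : Real.sqrt 2 ≠ 0 := by positivity
  rw [← h2]
  field_simp
end
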